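/- Let d ≥ 1, let h : ℝ → ℝ be continuously differentiable with a := inf_{x ∈ ℝ} |h'(x)| > 0, let ω ∈ ℝ^d with ω·j ≠ 0 for all j ∈ ℤ^d, j ≠ 0, and set λ_n := h(ω·n) for n ∈ ℤ^d. Let (f_k)_{k ∈ ℤ^d} be a family of functions ℝ → ℂ such that each composite f_k ∘ h is continuously differentiable, and suppose that either (i) there is M > 0 such that f_k ≡ 0 whenever |k| > M and ‖f_k ∘ h‖_{C¹} := sup_x |f_k(h(x))| + sup_x |d/dx f_k(h(x))| < ∞ for all k, or (ii) there is α > 0 such that f_k = e^{−α|k|} g_k for a family (g_k) with sup_{k ∈ ℤ^d} ‖g_k ∘ h‖_{C¹} < ∞. Define the matrix V by V_{m,m+k} := f_k(λ_m) for m, k ∈ ℤ^d. Then for every k ∈ ℤ^d: sup_{m ∈ ℤ^d} |V_{m,m+k}| + sup_{m ∈ ℤ^d, j ≠ 0} |V_{m+j,m+j+k} − V_{m,m+k}| / |λ_j − λ_0| ≤ (1 + 1/a) ‖f_k ∘ h‖_{C¹}, and consequently there exists α' > 0 with sup_{k ∈ ℤ^d} e^{α'|k|} ( sup_{m} |V_{m,m+k}|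 + sup_{m, j ≠ 0} |V_{m+j,m+j+k} − V_{m,m+k}| / |λ_j − λ_0| ) < ∞, i.e. V satisfies Assumption (A4) with exponent α'. -/

import Mathlib

noncomputable section

abbrev Zd (d : ℕ) := Fin d → ℤ

/-- `|k| = |k₁| + ⋯ + |k_d|` as a real number. -/
def absZ {d : ℕ} (k : Zd d) : ℝ := ∑ i, |(k i : ℝ)|

lemma absZ_nonneg {d : ℕ} (k : Zd d) : 0 ≤ absZ k :=
  Finset.sum_nonneg fun i _ => abs_nonneg _

lemma lipschitz_bound (F : ℝ → ℂ) (hF : ContDiff ℝ 1 F) (C : ℝ)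
    (hC : ∀ x, ‖deriv F x‖ ≤ C) (s t : ℝ) : ‖F t - F s‖ ≤ C * |t - s| := by
  have := Convex.norm_image_sub_le_of_norm_deriv_le (f := F) (s := Set.univ)
    (fun x _ => (hF.differentiable one_ne_zero).differentiableAt)
    (fun x _ => hC x) convex_univ (Set.mem_univ s) (Set.mem_univ t)
  simpa [Real.norm_eq_abs] using this

lemma mvt_lower (a : ℝ) (h : ℝ → ℝ) (hh : ContDiff ℝ 1 h)
    (hglb : IsGLB (Set.range fun x => |deriv h x|) a) (t : ℝ) (ht : t ≠ 0) :
    a * |t| ≤ |h t - h 0| := by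
  have hlb : ∀ x : ℝ, a ≤ |deriv h x| := fun x => hglb.1 ⟨x, rfl⟩
  have hd : Differentiable ℝ h := hh.differentiable one_ne_zero
  rcases lt_or_gt_of_ne ht with hneg | hpos
  · obtain ⟨c, _, hc⟩ := exists_deriv_eq_slope h hneg hd.continuous.continuousOn
      hd.differentiableOn
    have h1 : |h 0 - h t| = |deriv h c| * |0 - t| := by
      rw [hc, abs_div]; field_simp
    have h2 : a * |t| ≤ |deriv h c| * |0 - t| := by
      have := mul_le_mul_of_nonneg_right (hlb c) (abs_nonneg t)
      simpa [abs_sub_comm] using this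
    calc a * |t| ≤ |deriv h c| * |0 - t| := h2
      _ = |h 0 - h t| := h1.symm
      _ = |h t - h 0| := abs_sub_comm _ _
  · obtain ⟨c, _, hc⟩ := exists_deriv_eq_slope h hpos hd.continuous.continuousOn
      hd.differentiableOn
    have h1 : |h t - h 0| = |deriv h c| * |t - 0| := by
      rw [hc, abs_div]; field_simp
    rw [h1]
    simpa using mul_le_mul_of_nonneg_right (hlb c) (abs_nonneg t)

lemma key_estimate (d : ℕ) (a : ℝ) (ha : 0 < a)
    (h : ℝ → ℝ) (hh : ContDiff ℝ 1 h)
    (hglb : IsGLB (Set.range fun x => |deriv h x|) a)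
    (ω : Fin d → ℝ)
    (hω : ∀ j : Zd d, j ≠ 0 → (∑ i, ω i * j i) ≠ 0)
    (F : ℝ → ℂ) (hF : ContDiff ℝ 1 fun x => F (h x))
    (M₁ M₂ : ℝ)
    (hM₁ : ∀ x : ℝ, ‖F (h x)‖ ≤ M₁)
    (hM₂ : ∀ x : ℝ, ‖deriv (fun x => F (h x)) x‖ ≤ M₂)
    (m m' j : Zd d) (hj : j ≠ 0) :
    ‖F (h (∑ i, ω i * m i))‖ +
      ‖F (h (∑ i, ω i * (m' + j) i)) - F (h (∑ i, ω i * m' i))‖ /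
        |h (∑ i, ω i * j i) - h (∑ i, ω i * (0 : Zd d) i)| ≤
    (1 + 1 / a) * (M₁ + M₂) := by
  set G : ℝ → ℂ := fun x => F (h x) with hG
  have hM₁0 : 0 ≤ M₁ := le_trans (norm_nonneg _) (hM₁ 0)
  have hM₂0 : 0 ≤ M₂ := le_trans (norm_nonneg _) (hM₂ 0)
  set t : ℝ := ∑ i, ω i * j i with htdef
  have ht : t ≠ 0 := hω j hj
  have hzero : (∑ i, ω i * (0 : Zd d) i) = 0 := by simp
  have hsum : (∑ i, ω i * ((m' + j) i : ℝ)) = (∑ i, ω i * m' i) + t := by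
    rw [htdef, ← Finset.sum_add_distrib]
    refine Finset.sum_congr rfl fun i _ => ?_
    have : ((m' + j) i : ℝ) = (m' i : ℝ) + (j i : ℝ) := by push_cast [Pi.add_apply]; ring
    rw [this]; ring
  -- numerator bound
  have hnum : ‖G ((∑ i, ω i * m' i) + t) - G (∑ i, ω i * m' i)‖ ≤ M₂ * |t| := by
    have := lipschitz_bound G hF M₂ hM₂ (∑ i, ω i * m' i) ((∑ i, ω i * m' i) + t)
    simpa using this
  -- denominator bound
  have hden : a * |t| ≤ |h t - h 0| := mvt_lower a h hh hglb t ht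
  have hden0 : 0 < a * |t| := mul_pos ha (abs_pos.mpr ht)
  have hdiv : ‖G ((∑ i, ω i * m' i) + t) - G (∑ i, ω i * m' i)‖ / |h t - h 0|
      ≤ M₂ / a := by
    have h1 : ‖G ((∑ i, ω i * m' i) + t) - G (∑ i, ω i * m' i)‖ / |h t - h 0|
        ≤ (M₂ * |t|) / (a * |t|) :=
      div_le_div₀ (by positivity) hnum hden0 hden
    have h2 : (M₂ * |t|) / (a * |t|) = M₂ / a :=
      mul_div_mul_right _ _ (abs_ne_zero.mpr ht)
    linarith [h1, h2.le, h2.ge]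
  have hfirst : ‖G (∑ i, ω i * m i)‖ ≤ M₁ := hM₁ _
  have key : ‖G (∑ i, ω i * m i)‖ +
      ‖G ((∑ i, ω i * m' i) + t) - G (∑ i, ω i * m' i)‖ / |h t - h 0|
      ≤ M₁ + M₂ / a := add_le_add hfirst hdiv
  have hfinal : M₁ + M₂ / a ≤ (1 + 1 / a) * (M₁ + M₂) := by
    have h1a : 0 ≤ 1 / a := by positivity
    have : (1 + 1 / a) * (M₁ + M₂) = M₁ + M₂ / a + (M₂ + M₁ * (1/a)) := by
      field_simp; ring
    nlinarith [mul_nonneg h1a hM₁0]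
  rw [hzero, hsum]
  exact le_trans key hfinal

theorem shaped_perturbations_satisfy_A4
    (d : ℕ) (hd : 1 ≤ d) (a : ℝ) (ha : 0 < a)
    (h : ℝ → ℝ) (hh : ContDiff ℝ 1 h)
    (hglb : IsGLB (Set.range fun x => |deriv h x|) a)
    (ω : Fin d → ℝ)
    (hω : ∀ j : Zd d, j ≠ 0 → (∑ i, ω i * j i) ≠ 0)
    (f : Zd d → ℝ → ℂ)
    (hf : ∀ k : Zd d, ContDiff ℝ 1 fun x => f k (h x))
    (hcase :
      -- case (i): finitely many nonzero diagonals, each with finite C¹-norm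
      (∃ M : ℝ, 0 < M ∧ (∀ k : Zd d, M < absZ k → f k = 0) ∧
        ∀ k : Zd d, ∃ N : ℝ, ∀ x : ℝ,
          ‖f k (h x)‖ ≤ N ∧ ‖deriv (fun x => f k (h x)) x‖ ≤ N) ∨
      -- case (ii): exponentially decaying family with uniformly bounded C¹-norms
      (∃ α : ℝ, 0 < α ∧ ∃ g : Zd d → ℝ → ℂ,
        (∀ (k : Zd d) (x : ℝ), f k x = Real.exp (-(α * absZ k)) * g k x) ∧
        ∃ N : ℝ, ∀ (k : Zd d) (x : ℝ),
          ‖g k (h x)‖ ≤ N ∧ ‖deriv (fun x => g k (h x)) x‖ ≤ N)) :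
    let lam : Zd d → ℝ := fun n => h (∑ i, ω i * n i)
    -- V_{m,m+k} := f_k(λ_m)
    (∀ k : Zd d, ∀ M₁ M₂ : ℝ,
      (∀ x : ℝ, ‖f k (h x)‖ ≤ M₁) →
      (∀ x : ℝ, ‖deriv (fun x => f k (h x)) x‖ ≤ M₂) →
      ∀ m m' j : Zd d, j ≠ 0 →
        ‖f k (lam m)‖ +
          ‖f k (lam (m' + j)) - f k (lam m')‖ / |lam j - lam 0| ≤
        (1 + 1 / a) * (M₁ + M₂)) ∧
    ∃ α' : ℝ, 0 < α' ∧ ∃ M : ℝ, ∀ k m m' j : Zd d, j ≠ 0 →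
      Real.exp (α' * absZ k) *
        (‖f k (lam m)‖ +
          ‖f k (lam (m' + j)) - f k (lam m')‖ / |lam j - lam 0|) ≤ M := by
  intro lam
  have part1 : ∀ k : Zd d, ∀ M₁ M₂ : ℝ,
      (∀ x : ℝ, ‖f k (h x)‖ ≤ M₁) →
      (∀ x : ℝ, ‖deriv (fun x => f k (h x)) x‖ ≤ M₂) →
      ∀ m m' j : Zd d, j ≠ 0 →
        ‖f k (lam m)‖ +
          ‖f k (lam (m' + j)) - f k (lam m')‖ / |lam j - lam 0| ≤
        (1 + 1 / a) * (M₁ + M₂) := by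
    intro k M₁ M₂ hM₁ hM₂ m m' j hj
    exact key_estimate d a ha h hh hglb ω hω (f k) (hf k) M₁ M₂ hM₁ hM₂ m m' j hj
  refine ⟨part1, ?_⟩
  -- positivity of the expression's pieces, for nonnegativity
  have hexpr_nonneg : ∀ k m m' j : Zd d,
      0 ≤ ‖f k (lam m)‖ +
          ‖f k (lam (m' + j)) - f k (lam m')‖ / |lam j - lam 0| := by
    intro k m m' j
    positivity
  rcases hcase with ⟨M, hM, hvanish, hbnd⟩ | ⟨α, hα, g, hgf, N, hN⟩
  · -- case (i)
    choose Nk hNk using hbnd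
    set T : Finset (Zd d) := Finset.Icc (fun _ => -⌈M⌉) (fun _ => ⌈M⌉) with hT
    have hTne : T.Nonempty := by
      refine ⟨0, ?_⟩
      rw [hT, Finset.mem_Icc]
      have h1 : (0 : ℤ) ≤ ⌈M⌉ := Int.ceil_nonneg hM.le
      constructor <;> intro i <;> simp <;> omega
    set Mfin : ℝ := T.sup' hTne (fun k => Real.exp (absZ k) * ((1 + 1 / a) * (Nk k + Nk k)))
      with hMfin
    refine ⟨1, one_pos, max Mfin 0, ?_⟩
    intro k m m' j hj
    by_cases hk : absZ k ≤ M
    · have hmem : k ∈ T := by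
        rw [hT, Finset.mem_Icc]
        have hki : ∀ i, |(k i : ℝ)| ≤ (⌈M⌉ : ℝ) := by
          intro i
          have h1 : |(k i : ℝ)| ≤ absZ k :=
            Finset.single_le_sum (f := fun i => |(k i : ℝ)|)
              (fun i _ => abs_nonneg _) (Finset.mem_univ i)
          exact h1.trans (hk.trans (Int.le_ceil M))
        constructor <;> intro i
        · have := (abs_le.mp (hki i)).1
          have : -((⌈M⌉ : ℝ)) ≤ ((k i : ℤ) : ℝ) := this
          exact_mod_cast this
        · have := (abs_le.mp (hki i)).2
          exact_mod_cast this
      have hb := part1 k (Nk k) (Nk k) (fun x => (hNk k x).1) (fun x => (hNk k x).2) m m' j hj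
      have hle : Real.exp (1 * absZ k) *
          (‖f k (lam m)‖ +
            ‖f k (lam (m' + j)) - f k (lam m')‖ / |lam j - lam 0|)
          ≤ Real.exp (absZ k) * ((1 + 1 / a) * (Nk k + Nk k)) := by
        rw [one_mul]
        exact mul_le_mul_of_nonneg_left hb (Real.exp_nonneg _)
      have hsup : Real.exp (absZ k) * ((1 + 1 / a) * (Nk k + Nk k)) ≤ Mfin :=
        Finset.le_sup' (f := fun k => Real.exp (absZ k) * ((1 + 1 / a) * (Nk k + Nk k))) hmem
      exact hle.trans (hsup.trans (le_max_left _ _))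
    · push_neg at hk
      have hz : f k = 0 := hvanish k hk
      rw [hz]
      simp
  · -- case (ii)
    set c : Zd d → ℝ := fun k => Real.exp (-(α * absZ k)) with hc
    have hcpos : ∀ k, 0 < c k := fun k => Real.exp_pos _
    have hN0 : 0 ≤ N := le_trans (norm_nonneg _) (hN 0 0).1
    refine ⟨α, hα, (1 + 1 / a) * (N + N), ?_⟩
    intro k m m' j hj
    have hM₁ : ∀ x : ℝ, ‖f k (h x)‖ ≤ c k * N := by
      intro x
      rw [hgf k (h x)]
      rw [norm_mul, Complex.norm_real, Real.norm_eq_abs, abs_of_pos (hcpos k)]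
      exact mul_le_mul_of_nonneg_left (hN k x).1 (hcpos k).le
    have hM₂ : ∀ x : ℝ, ‖deriv (fun x => f k (h x)) x‖ ≤ c k * N := by
      intro x
      have heq : (fun x => f k (h x)) = fun x => ((c k : ℝ) : ℂ) * g k (h x) :=
        funext fun x => hgf k (h x)
      rw [heq, deriv_const_mul_field, norm_mul]
      have : ‖((c k : ℝ) : ℂ)‖ = c k := by
        rw [Complex.norm_real, Real.norm_eq_abs, abs_of_pos (hcpos k)]
      rw [this]
      exact mul_le_mul_of_nonneg_left (hN k x).2 (hcpos k).le
    have hb := part1 k (c k * N) (c k * N) hM₁ hM₂ m m' j hj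
    have hle : Real.exp (α * absZ k) *
        (‖f k (lam m)‖ +
          ‖f k (lam (m' + j)) - f k (lam m')‖ / |lam j - lam 0|)
        ≤ Real.exp (α * absZ k) * ((1 + 1 / a) * (c k * N + c k * N)) :=
      mul_le_mul_of_nonneg_left hb (Real.exp_nonneg _)
    have hcancel : Real.exp (α * absZ k) * ((1 + 1 / a) * (c k * N + c k * N))
        = (1 + 1 / a) * (N + N) := by
      have h1 : Real.exp (α * absZ k) * c k = 1 := by
        rw [hc, ← Real.exp_add]
        simp
      calc Real.exp (α * absZ k) * ((1 + 1 / a) * (c k * N + c k * N))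
          = (Real.exp (α * absZ k) * c k) * ((1 + 1 / a) * (N + N)) := by ring
        _ = (1 + 1 / a) * (N + N) := by rw [h1, one_mul]
    exact hle.trans hcancel.le
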